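/- Let X be a compactum (a compact perfect metric space with more than one point), let n ≥ 2 be an integer, and let f : X → X be a continuous map. If F_n(f) is strongly transitive, then SF_n(f) is strongly transitive; and if SF_n(f) is strongly transitive, then f is strongly transitive. -/

import Mathlib

open Metric Set TopologicalSpace

variable (X : Type*) [MetricSpace X] (n : ℕ)

/-- The `n`-fold symmetric product `F_n(X)`: nonempty subsets of `X` with at most `n`
points, as a subspace of the nonempty compact subsets of `X` with the Hausdorff metric. -/
abbrev Fn := {A : NonemptyCompacts X // (A : Set X).Finite ∧ (A : Set X).ncard ≤ n}

/-- The induced map `F_n(f)` on the `n`-fold symmetric product, `A ↦ f(A)`. -/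
noncomputable def FnMap (f : X → X) : Fn X n → Fn X n := fun A =>
  ⟨⟨⟨f '' (A.1 : Set X), (A.2.1.image f).isCompact⟩, A.1.nonempty.image f⟩,
    A.2.1.image f, le_trans (Set.ncard_image_le A.2.1) A.2.2⟩

/-- `F_1(X) ⊆ F_n(X)`: the set of singletons. -/
def F1 : Set (Fn X n) := {A | ∃ x : X, (A.1 : Set X) = {x}}

/-- The setoid collapsing `F_1(X)` to a point. -/
def SFnSetoid : Setoid (Fn X n) where
  r A B := A = B ∨ (A ∈ F1 X n ∧ B ∈ F1 X n)
  iseqv := by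
    refine ⟨fun _ => Or.inl rfl, fun h => h.imp Eq.symm And.symm, fun h₁ h₂ => ?_⟩
    rcases h₁ with rfl | h₁
    · exact h₂
    · rcases h₂ with rfl | h₂
      · exact Or.inr h₁
      · exact Or.inr ⟨h₁.1, h₂.2⟩

/-- The `n`-fold symmetric product suspension `SF_n(X) = F_n(X)/F_1(X)`,
with the quotient topology. -/
abbrev SFn := Quotient (SFnSetoid X n)

/-- The quotient map `q : F_n(X) → SF_n(X)`. -/
def SFnQ : Fn X n → SFn X n := Quotient.mk (SFnSetoid X n)

/-- The induced map `SF_n(f)` on the suspension, with `SF_n(f) ∘ q = q ∘ F_n(f)`. -/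
noncomputable def SFnMap (f : X → X) : SFn X n → SFn X n :=
  Quotient.lift (fun A => SFnQ X n (FnMap X n f A))
    (fun A B h => Quotient.sound (by
      rcases h with rfl | ⟨⟨x, hx⟩, ⟨y, hy⟩⟩
      · exact Or.inl rfl
      · exact Or.inr ⟨⟨f x, by simp [FnMap, hx]⟩, ⟨f y, by simp [FnMap, hy]⟩⟩))

/-- The metric `ρ` on `SF_n(X)`:
`ρ(χ₁,χ₂) = H(F_1(X) ∪ q⁻¹(χ₁), F_1(X) ∪ q⁻¹(χ₂))` where `H` is the Hausdorff
distance between subsets of `F_n(X)`. -/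
noncomputable def SFnDist : SFn X n → SFn X n → ℝ := fun a b =>
  Metric.hausdorffDist (F1 X n ∪ SFnQ X n ⁻¹' {a}) (F1 X n ∪ SFnQ X n ⁻¹' {b})

/-- `g` is strongly transitive: for every nonempty open `U` there is `M` with
`⋃_{i=1}^{M} g^i(U) = Z`. -/
def StronglyTransitive {Z : Type*} [TopologicalSpace Z] (g : Z → Z) : Prop :=
  ∀ U : Set Z, IsOpen U → U.Nonempty →
    ∃ M : ℕ, 0 < M ∧ (⋃ i ∈ Finset.Icc 1 M, g^[i] '' U) = Set.univ

lemma FnMap_iterate_coe (X : Type*) [MetricSpace X] (n : ℕ) (f : X → X) (i : ℕ) (A : Fn X n) :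
    (((FnMap X n f)^[i] A).1 : Set X) = f^[i] '' (A.1 : Set X) := by
  induction i generalizing A with
  | zero => simp
  | succ i ih =>
    rw [Function.iterate_succ_apply, ih, Function.iterate_succ, Set.image_comp]
    rfl

lemma SFnMap_iterate_mk (X : Type*) [MetricSpace X] (n : ℕ) (f : X → X) (i : ℕ) (A : Fn X n) :
    (SFnMap X n f)^[i] (SFnQ X n A) = SFnQ X n ((FnMap X n f)^[i] A) := by
  induction i generalizing A with
  | zero => rfl
  | succ i ih =>
    rw [Function.iterate_succ_apply, Function.iterate_succ_apply,
      show SFnMap X n f (SFnQ X n A) = SFnQ X n (FnMap X n f A) from rfl, ih]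

/-- The two-point element `{x,y}` of `F_n(X)`, for `x ≠ y` and `2 ≤ n`. -/
noncomputable def pairFn (X : Type*) [MetricSpace X] {n : ℕ} (hn : 2 ≤ n) {x y : X}
    (hxy : x ≠ y) : Fn X n :=
  ⟨⟨⟨{x, y}, ((Set.finite_singleton y).insert x).isCompact⟩,
      ⟨x, Set.mem_insert x {y}⟩⟩,
    (Set.finite_singleton y).insert x,
    by show ({x, y} : Set X).ncard ≤ n; rw [Set.ncard_pair hxy]; exact hn⟩

lemma pairFn_coe (X : Type*) [MetricSpace X] {n : ℕ} (hn : 2 ≤ n) {x y : X} (hxy : x ≠ y) :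
    ((pairFn X hn hxy : Fn X n).1 : Set X) = {x, y} := rfl

lemma pairFn_not_mem_F1 (X : Type*) [MetricSpace X] {n : ℕ} (hn : 2 ≤ n) {x y : X}
    (hxy : x ≠ y) : (pairFn X hn hxy : Fn X n) ∉ F1 X n := by
  rintro ⟨w, hw⟩
  rw [pairFn_coe X hn hxy] at hw
  have h1 : x ∈ ({w} : Set X) := hw ▸ Set.mem_insert x {y}
  have h2 : y ∈ ({w} : Set X) := hw ▸ Set.mem_insert_of_mem x rfl
  rw [Set.mem_singleton_iff] at h1 h2
  exact hxy (h1.trans h2.symm)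

lemma SFnQ_eq_of_not_mem_F1 (X : Type*) [MetricSpace X] (n : ℕ) {A B : Fn X n}
    (h : SFnQ X n A = SFnQ X n B) (hB : B ∉ F1 X n) : A = B := by
  have := Quotient.exact h
  rcases this with h' | h'
  · exact h'
  · exact absurd h'.2 hB

theorem stmt19 (X : Type*) [MetricSpace X] [CompactSpace X] [Nontrivial X]
    (hX : Perfect (Set.univ : Set X))
    (n : ℕ) (hn : 2 ≤ n) (f : X → X) (hf : Continuous f) :
    (StronglyTransitive (FnMap X n f) → StronglyTransitive (SFnMap X n f)) ∧
    (StronglyTransitive (SFnMap X n f) → StronglyTransitive f) := by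
  constructor
  · -- F_n(f) strongly transitive → SF_n(f) strongly transitive
    intro hT U hU hUne
    have hq : Continuous (SFnQ X n) := continuous_quotient_mk'
    obtain ⟨χ, hχ⟩ := hUne
    obtain ⟨A₀, rfl⟩ := Quotient.exists_rep χ
    obtain ⟨M, hM, hcov⟩ := hT (SFnQ X n ⁻¹' U) (hU.preimage hq) ⟨A₀, hχ⟩
    refine ⟨M, hM, Set.eq_univ_of_forall fun χ => ?_⟩
    obtain ⟨A, rfl⟩ := Quotient.exists_rep χ
    have hA : A ∈ ⋃ i ∈ Finset.Icc 1 M, (FnMap X n f)^[i] '' (SFnQ X n ⁻¹' U) :=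
      hcov ▸ Set.mem_univ A
    simp only [Set.mem_iUnion] at hA ⊢
    obtain ⟨i, hi, B, hB, hBA⟩ := hA
    exact ⟨i, hi, SFnQ X n B, hB, by rw [SFnMap_iterate_mk, hBA]; rfl⟩
  · -- SF_n(f) strongly transitive → f strongly transitive
    intro hT U hU hUne
    -- build the open set W ⊆ F_n(X) of non-singleton sets contained in U
    set W : Set (Fn X n) := {B | (B.1 : Set X) ⊆ U ∧ B ∉ F1 X n} with hW
    -- W is open
    have hWopen : IsOpen W := by
      rw [Metric.isOpen_iff]
      rintro B ⟨hBU, hBF1⟩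
      obtain ⟨x, hx⟩ := B.1.nonempty
      have hxy : ∃ y ∈ (B.1 : Set X), y ≠ x := by
        by_contra h
        push_neg at h
        exact hBF1 ⟨x, Set.eq_singleton_iff_unique_mem.2 ⟨hx, h⟩⟩
      obtain ⟨y, hy, hyx⟩ := hxy
      obtain ⟨ε₁, hε₁, hthick⟩ := B.1.isCompact.exists_thickening_subset_open hU hBU
      have hdxy : 0 < dist x y := dist_pos.2 hyx.symm
      refine ⟨min ε₁ (dist x y / 3), lt_min hε₁ (by linarith), fun C hC => ?_⟩
      have hdist : hausdorffDist (C.1 : Set X) (B.1 : Set X) < min ε₁ (dist x y / 3) := by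
        rwa [mem_ball, Subtype.dist_eq, NonemptyCompacts.dist_eq] at hC
      have hfin : EMetric.hausdorffEdist (C.1 : Set X) (B.1 : Set X) ≠ ⊤ :=
        Metric.hausdorffEdist_ne_top_of_nonempty_of_bounded C.1.nonempty B.1.nonempty
          C.1.isCompact.isBounded B.1.isCompact.isBounded
      constructor
      · -- C ⊆ U
        intro c hc
        have h1 : infDist c (B.1 : Set X) ≤ hausdorffDist (C.1 : Set X) (B.1 : Set X) :=
          Metric.infDist_le_hausdorffDist_of_mem hc hfin
        have : c ∈ Metric.thickening ε₁ (B.1 : Set X) :=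
          (Metric.mem_thickening_iff_infDist_lt B.1.nonempty).2
            (lt_of_le_of_lt h1 (lt_of_lt_of_le hdist (min_le_left _ _)))
        exact hthick this
      · -- C is not a singleton
        rintro ⟨z, hz⟩
        have hdist' : hausdorffDist (B.1 : Set X) (C.1 : Set X) < dist x y / 3 := by
          rw [Metric.hausdorffDist_comm]
          exact lt_of_lt_of_le hdist (min_le_right _ _)
        have hfin' : EMetric.hausdorffEdist (B.1 : Set X) (C.1 : Set X) ≠ ⊤ := by
          exact Metric.hausdorffEdist_ne_top_of_nonempty_of_bounded B.1.nonempty C.1.nonempty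
            B.1.isCompact.isBounded C.1.isCompact.isBounded
        have hx' : infDist x (C.1 : Set X) < dist x y / 3 :=
          lt_of_le_of_lt (Metric.infDist_le_hausdorffDist_of_mem hx hfin') hdist'
        have hy' : infDist y (C.1 : Set X) < dist x y / 3 :=
          lt_of_le_of_lt (Metric.infDist_le_hausdorffDist_of_mem hy hfin') hdist'
        obtain ⟨x', hx'C, hxx'⟩ := (Metric.infDist_lt_iff C.1.nonempty).1 hx'
        obtain ⟨y', hy'C, hyy'⟩ := (Metric.infDist_lt_iff C.1.nonempty).1 hy'
        rw [hz, Set.mem_singleton_iff] at hx'C hy'C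
        rw [hx'C] at hxx'
        rw [hy'C] at hyy'
        have htri : dist x y ≤ dist x z + dist z y := dist_triangle _ _ _
        rw [dist_comm z y] at htri
        linarith
    -- W is nonempty
    have hWne : W.Nonempty := by
      obtain ⟨u, hu⟩ := hUne
      have hacc : AccPt u (Filter.principal (Set.univ : Set X)) := hX.acc u (Set.mem_univ u)
      obtain ⟨v, hv, hvu⟩ := accPt_iff_nhds.1 hacc U (hU.mem_nhds hu)
      have hvU : v ∈ U := hv.1
      refine ⟨pairFn X hn (Ne.symm hvu), ?_, pairFn_not_mem_F1 X hn (Ne.symm hvu)⟩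
      rw [pairFn_coe X hn (Ne.symm hvu)]
      intro a ha
      rcases ha with rfl | ha
      · exact hu
      · rw [Set.mem_singleton_iff] at ha; subst ha; exact hvU
    -- q(W) is open and nonempty
    have hpre : SFnQ X n ⁻¹' (SFnQ X n '' W) = W := by
      ext A
      constructor
      · rintro ⟨B, hBW, hBA⟩
        rcases Quotient.exact hBA with rfl | h
        · exact hBW
        · exact absurd h.1 hBW.2
      · exact fun h => ⟨A, h, rfl⟩
    have hqWopen : IsOpen (SFnQ X n '' W) := by
      rw [← isQuotientMap_quotient_mk'.isOpen_preimage]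
      show IsOpen (SFnQ X n ⁻¹' (SFnQ X n '' W))
      rwa [hpre]
    obtain ⟨B₀, hB₀⟩ := hWne
    obtain ⟨M, hM, hcov⟩ := hT (SFnQ X n '' W) hqWopen ⟨SFnQ X n B₀, B₀, hB₀, rfl⟩
    refine ⟨M, hM, Set.eq_univ_of_forall fun x => ?_⟩
    obtain ⟨z, hz⟩ := exists_ne x
    -- the element {x, z} of F_n(X), not a singleton
    set A : Fn X n := pairFn X hn (Ne.symm hz) with hA
    have hAF1 : A ∉ F1 X n := pairFn_not_mem_F1 X hn (Ne.symm hz)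
    have hmem : SFnQ X n A ∈ ⋃ i ∈ Finset.Icc 1 M, (SFnMap X n f)^[i] '' (SFnQ X n '' W) :=
      hcov ▸ Set.mem_univ _
    simp only [Set.mem_iUnion] at hmem ⊢
    obtain ⟨i, hi, χ, hχ, hχA⟩ := hmem
    obtain ⟨B, hBW, rfl⟩ := hχ
    rw [SFnMap_iterate_mk] at hχA
    have hEq : (FnMap X n f)^[i] B = A := SFnQ_eq_of_not_mem_F1 X n hχA hAF1
    have hcoe : f^[i] '' (B.1 : Set X) = ({x, z} : Set X) := by
      have h := FnMap_iterate_coe X n f i B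
      rw [hEq, hA, pairFn_coe X hn (Ne.symm hz)] at h
      exact h.symm
    have hxmem : x ∈ f^[i] '' (B.1 : Set X) := hcoe ▸ Set.mem_insert x {z}
    obtain ⟨b, hb, hbx⟩ := hxmem
    exact ⟨i, hi, b, hBW.1 hb, hbx⟩
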